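/- Let π be a linked partition in NCL(n) such that π̂ = 1_n, and let A be a block of π with 1 ∉ A. Then min(A) is doubly-covered by π. -/
import Mathlib


open scoped Classical

/-- The minimum of a finset of naturals (`0` if empty). -/
noncomputable def fmin (A : Finset ℕ) : ℕ := sInf (A : Set ℕ)

/-- The maximum of a finset of naturals (`0` if empty). -/
noncomputable def fmax (A : Finset ℕ) : ℕ := sSup (A : Set ℕ)

/-- `α` is a partition of the finite set `F ⊆ ℕ`. -/
def IsPartitionOfSet (F : Finset ℕ) (α : Finset (Finset ℕ)) : Prop :=
  (∀ V ∈ α, V.Nonempty) ∧ (∀ V ∈ α, V ⊆ F) ∧ (∀ m ∈ F, ∃ V ∈ α, m ∈ V) ∧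
    ∀ V ∈ α, ∀ W ∈ α, V ≠ W → V ∩ W = ∅

/-- `α` is a partition of `{1,…,n}`. -/
def IsPartitionOf (n : ℕ) (α : Finset (Finset ℕ)) : Prop :=
  IsPartitionOfSet (Finset.Icc 1 n) α

/-- Two distinct blocks of the family `π` cross: there are `a < b < c < d` with
`a, c` in one block and `b, d` in a different block. -/
def IsCrossing (π : Finset (Finset ℕ)) : Prop :=
  ∃ A ∈ π, ∃ B ∈ π, A ≠ B ∧
    ∃ a ∈ A, ∃ b ∈ B, ∃ c ∈ A, ∃ d ∈ B, a < b ∧ b < c ∧ c < d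

/-- `α ∈ NC(n)`: a non-crossing partition of `{1,…,n}`. -/
def IsNCPartition (n : ℕ) (α : Finset (Finset ℕ)) : Prop :=
  IsPartitionOf n α ∧ ¬ IsCrossing α

/-- Reverse refinement order `α ≤ β`: every block of `α` is contained in a block of `β`
(equivalently, every block of `β` is a union of blocks of `α`). -/
def Refines (α β : Finset (Finset ℕ)) : Prop := ∀ V ∈ α, ∃ W ∈ β, V ⊆ W

/-- The partial order `α ≪ β`: `α ≤ β` and for every block `W` of `β` there is a block
`V` of `α` containing both `min W` and `max W`. -/
def LL (α β : Finset (Finset ℕ)) : Prop :=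
  Refines α β ∧ ∀ W ∈ β, ∃ V ∈ α, fmin W ∈ V ∧ fmax W ∈ V

/-- A block `V` (of `α`) is `β`-special: some block `W` of `β` has the same min and max. -/
def SpecialBlock (β : Finset (Finset ℕ)) (V : Finset ℕ) : Prop :=
  ∃ W ∈ β, fmin V = fmin W ∧ fmax V = fmax W

/-- `V` is an outer block of `α`: no block of `α` strictly nests around it. -/
def OuterBlock (α : Finset (Finset ℕ)) (V : Finset ℕ) : Prop :=
  ∀ V' ∈ α, ¬ (fmin V' < fmin V ∧ fmax V < fmax V')

/-- `π` is a linked partition of the finite set `F ⊆ ℕ`. -/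
def IsLinkedPartitionOfSet (F : Finset ℕ) (π : Finset (Finset ℕ)) : Prop :=
  (∀ A ∈ π, A.Nonempty) ∧ (∀ A ∈ π, A ⊆ F) ∧ (∀ m ∈ F, ∃ A ∈ π, m ∈ A) ∧
    ∀ A ∈ π, ∀ B ∈ π, A ≠ B →
      A ∩ B = ∅ ∨
        (2 ≤ A.card ∧ 2 ≤ B.card ∧ (A ∩ B).card = 1 ∧ fmin A ≠ fmin B ∧
          ∀ x ∈ A ∩ B, x = fmin A ∨ x = fmin B)

/-- `π ∈ NCL(F)`: a non-crossing linked partition of the finite set `F`. -/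
def IsNCLOfSet (F : Finset ℕ) (π : Finset (Finset ℕ)) : Prop :=
  IsLinkedPartitionOfSet F π ∧ ¬ IsCrossing π

/-- `π ∈ NCL(n)`: a non-crossing linked partition of `{1,…,n}`. -/
def IsNCL (n : ℕ) (π : Finset (Finset ℕ)) : Prop :=
  IsNCLOfSet (Finset.Icc 1 n) π

/-- The number of blocks of `π` containing `m`. -/
noncomputable def coverCount (π : Finset (Finset ℕ)) (m : ℕ) : ℕ :=
  (π.filter fun A => m ∈ A).card

/-- `m` is singly-covered by `π`: it lies in exactly one block. -/
def SinglyCovered (π : Finset (Finset ℕ)) (m : ℕ) : Prop := coverCount π m = 1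

/-- `m` is doubly-covered by `π`: it lies in exactly two blocks. -/
def DoublyCovered (π : Finset (Finset ℕ)) (m : ℕ) : Prop := coverCount π m = 2

/-- The partition `π̂` generated by the blocks of `π`: its blocks are the connected
components of the ground set under the relation of lying in a common block of `π`. -/
noncomputable def genPart (π : Finset (Finset ℕ)) : Finset (Finset ℕ) :=
  (π.sup id).image fun m =>
    (π.sup id).filter fun x =>
      Relation.EqvGen (fun a b => ∃ A ∈ π, a ∈ A ∧ b ∈ A) m x

/-- The unlinking `π̌` of a linked partition `π`. -/
noncomputable def unlink (π : Finset (Finset ℕ)) : Finset (Finset ℕ) :=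
  π.image fun A => if SinglyCovered π (fmin A) then A else A.erase (fmin A)

/-- The block of `α` containing `m` (empty if there is none). -/
noncomputable def blockOf (α : Finset (Finset ℕ)) (m : ℕ) : Finset ℕ :=
  (α.filter fun V => m ∈ V).sup id

/-- The successor of `m` in the cycle on the block `V` (elements in increasing order). -/
noncomputable def nextInBlock (V : Finset ℕ) (m : ℕ) : ℕ :=
  if m = fmax V then fmin V else fmin (V.filter fun x => m < x)

/-- The predecessor of `m` in the cycle on the block `V`. -/
noncomputable def prevInBlock (V : Finset ℕ) (m : ℕ) : ℕ :=
  if m = fmin V then fmax V else fmax (V.filter fun x => x < m)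

/-- The permutation `P_α` associated to a partition `α`, as a function: each block
`{i₁ < i₂ < ⋯ < iₘ}` becomes the cycle `i₁ ↦ i₂ ↦ ⋯ ↦ iₘ ↦ i₁`. -/
noncomputable def permOf (α : Finset (Finset ℕ)) (m : ℕ) : ℕ :=
  if m ∈ blockOf α m then nextInBlock (blockOf α m) m else m

/-- The inverse permutation `P_α⁻¹`, as a function. -/
noncomputable def permOfInv (α : Finset (Finset ℕ)) (m : ℕ) : ℕ :=
  if m ∈ blockOf α m then prevInBlock (blockOf α m) m else m

/-- The action `τ·α` of a map `τ` on a partition `α = {V₁,…,V_p}`, giving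
`{τ(V₁),…,τ(V_p)}`. -/
def mapPart (τ : ℕ → ℕ) (α : Finset (Finset ℕ)) : Finset (Finset ℕ) :=
  α.image fun V => V.image τ

/-- The cycled unlinking `π° := P_{π̂}⁻¹ · π̌`. -/
noncomputable def cycUnlink (π : Finset (Finset ℕ)) : Finset (Finset ℕ) :=
  mapPart (permOfInv (genPart π)) (unlink π)

/-- `NC(n)` as a finset. -/
noncomputable def NCF (n : ℕ) : Finset (Finset (Finset ℕ)) :=
  ((Finset.Icc 1 n).powerset.powerset).filter (IsNCPartition n)

/-- `NCL(n)` as a finset. -/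
noncomputable def NCLF (n : ℕ) : Finset (Finset (Finset ℕ)) :=
  ((Finset.Icc 1 n).powerset.powerset).filter (IsNCL n)

/-- The restriction `π|_E`: the blocks of `π` contained in `E`. -/
def restrictL (π : Finset (Finset ℕ)) (E : Finset ℕ) : Finset (Finset ℕ) :=
  π.filter fun A => A ⊆ E

/-- The partition `β₀` obtained from `β` by leaving blocks of size `≤ 2` intact and
breaking each block `W` with `|W| ≥ 3` into the doubleton `{min W, max W}` together
with `|W| - 2` singletons. -/
noncomputable def breakBlocks (β : Finset (Finset ℕ)) : Finset (Finset ℕ) :=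
  β.biUnion fun W =>
    if W.card ≤ 2 then {W}
    else insert {fmin W, fmax W} ((W \ {fmin W, fmax W}).image fun x => ({x} : Finset ℕ))

lemma fmin_le {A : Finset ℕ} {x : ℕ} (hx : x ∈ A) : fmin A ≤ x :=
  Nat.sInf_le (Finset.mem_coe.mpr hx)

lemma fmin_mem {A : Finset ℕ} (h : A.Nonempty) : fmin A ∈ A :=
  Finset.mem_coe.mp (Nat.sInf_mem (Finset.coe_nonempty.mpr h))

/-- Let `π ∈ NCL(n)` with `π̂ = 1ₙ`, and let `A` be a block of `π`
with `1 ∉ A`. Then `min A` is doubly-covered by `π`. -/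
theorem stmt13 (n : ℕ) (π : Finset (Finset ℕ)) (hπ : IsNCL n π)
    (hgen : genPart π = {Finset.Icc 1 n})
    (A : Finset ℕ) (hA : A ∈ π) (h1 : 1 ∉ A) :
    DoublyCovered π (fmin A) := by
  classical
  obtain ⟨⟨hne, hsub, hcov, hlink⟩, hnc⟩ := hπ
  set m := fmin A with hmdef
  have hAne : A.Nonempty := hne A hA
  have hmA : m ∈ A := fmin_mem hAne
  have hminA : ∀ y ∈ A, m ≤ y := fun y hy => fmin_le hy
  have hmIcc : m ∈ Finset.Icc 1 n := hsub A hA hmA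
  have hm1 : 1 ≤ m := (Finset.mem_Icc.mp hmIcc).1
  have hmn : m ≤ n := (Finset.mem_Icc.mp hmIcc).2
  have hm2 : 2 ≤ m := by
    rcases Nat.lt_or_ge m 2 with h | h
    · interval_cases m
      · exact absurd hmA h1
    · exact h
  -- ground set
  have hground : π.sup id = Finset.Icc 1 n := by
    apply Finset.Subset.antisymm
    · intro x hx
      rw [Finset.mem_sup] at hx
      obtain ⟨E, hE, hxE⟩ := hx
      exact hsub E hE hxE
    · intro x hx
      obtain ⟨E, hE, hxE⟩ := hcov x hx
      rw [Finset.mem_sup]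
      exact ⟨E, hE, hxE⟩
  -- connectivity
  have hconn : ∀ x ∈ Finset.Icc 1 n, ∀ y ∈ Finset.Icc 1 n,
      Relation.EqvGen (fun a b => ∃ E ∈ π, a ∈ E ∧ b ∈ E) x y := by
    intro x hx y hy
    have hx' : (Finset.Icc 1 n).filter
        (fun z => Relation.EqvGen (fun a b => ∃ E ∈ π, a ∈ E ∧ b ∈ E) x z)
        ∈ genPart π := by
      unfold genPart
      rw [hground]
      exact Finset.mem_image_of_mem _ hx
    rw [hgen, Finset.mem_singleton] at hx'
    have hy' : y ∈ (Finset.Icc 1 n).filter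
        (fun z => Relation.EqvGen (fun a b => ∃ E ∈ π, a ∈ E ∧ b ∈ E) x z) := by
      rw [hx']; exact hy
    exact (Finset.mem_filter.mp hy').2
  have hAf : A ∈ π.filter (fun E => m ∈ E) := Finset.mem_filter.mpr ⟨hA, hmA⟩
  have hc1 : 1 ≤ coverCount π m := Finset.card_pos.mpr ⟨A, hAf⟩
  -- at most two blocks contain m
  have hle2 : coverCount π m ≤ 2 := by
    by_contra hgt
    push_neg at hgt
    obtain ⟨A1, A2, A3, hA1, hA2, hA3, h12, h13, h23⟩ :=
      Finset.two_lt_card_iff.mp hgt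
    obtain ⟨hA1π, hmA1⟩ := Finset.mem_filter.mp hA1
    obtain ⟨hA2π, hmA2⟩ := Finset.mem_filter.mp hA2
    obtain ⟨hA3π, hmA3⟩ := Finset.mem_filter.mp hA3
    have key : ∀ B C : Finset ℕ, B ∈ π → C ∈ π → B ≠ C → m ∈ B → m ∈ C →
        (m = fmin B ∨ m = fmin C) ∧ fmin B ≠ fmin C := by
      intro B C hB hC hBC hmB hmC
      rcases hlink B hB C hC hBC with hemp | ⟨_, _, _, hfne, hall⟩
      · exact absurd (hemp ▸ Finset.mem_inter.mpr ⟨hmB, hmC⟩) (Finset.notMem_empty m)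
      · exact ⟨hall m (Finset.mem_inter.mpr ⟨hmB, hmC⟩), hfne⟩
    obtain ⟨h12', hf12⟩ := key A1 A2 hA1π hA2π h12 hmA1 hmA2
    obtain ⟨h13', hf13⟩ := key A1 A3 hA1π hA3π h13 hmA1 hmA3
    obtain ⟨h23', hf23⟩ := key A2 A3 hA2π hA3π h23 hmA2 hmA3
    rcases h12' with h | h <;> rcases h13' with h' | h' <;> rcases h23' with h'' | h'' <;>
      omega
  -- the heart: m is not singly covered
  have hne1 : coverCount π m ≠ 1 := by
    intro hsc
    have huniq : ∀ E ∈ π, m ∈ E → E = A := by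
      intro E hE hmE
      exact Finset.card_le_one.mp (le_of_eq hsc) E
        (Finset.mem_filter.mpr ⟨hE, hmE⟩) A hAf
    -- a straddling block exists
    have hT : ∃ x : ℕ, m < x ∧ ∃ C ∈ π, x ∈ C ∧ ∃ a ∈ C, a < m := by
      by_contra hTe
      push_neg at hTe
      have key : ∀ x y : ℕ, (∃ E ∈ π, x ∈ E ∧ y ∈ E) → (x < m ↔ y < m) := by
        intro x y ⟨E, hE, hxE, hyE⟩
        have side : ∀ u v : ℕ, u ∈ E → v ∈ E → u < m → v < m := by
          intro u v huE hvE hum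
          by_contra hvm
          push_neg at hvm
          rcases eq_or_lt_of_le hvm with heq | hlt
          · have hEA := huniq E hE (heq ▸ hvE)
            exact absurd hum (not_lt.mpr (hminA u (hEA ▸ huE)))
          · exact absurd hum (not_lt.mpr (hTe v hlt E hE hvE u huE))
        constructor
        · intro h; exact side x y hxE hyE h
        · intro h; exact side y x hyE hxE h
      have inv : ∀ x y : ℕ,
          Relation.EqvGen (fun a b => ∃ E ∈ π, a ∈ E ∧ b ∈ E) x y → (x < m ↔ y < m) := by
        intro x y h
        induction h with
        | rel x y h => exact key x y h
        | refl x => exact Iff.rfl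
        | symm x y _ ih => exact ih.symm
        | trans x y z _ _ ih1 ih2 => exact ih1.trans ih2
      have hm1' : m - 1 ∈ Finset.Icc 1 n := Finset.mem_Icc.mpr ⟨by omega, by omega⟩
      have hrel := hconn (m - 1) hm1' m hmIcc
      have := (inv _ _ hrel).mp (by omega)
      omega
    -- choose the straddler with minimal upper element b
    set T : Set ℕ := {x | m < x ∧ ∃ C ∈ π, x ∈ C ∧ ∃ a ∈ C, a < m} with hTdef
    have hTne : T.Nonempty := hT
    set b := sInf T with hbdef
    have hbT : b ∈ T := Nat.sInf_mem hTne
    obtain ⟨hmb, C, hC, hbC, a, haC, ham⟩ := hbT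
    have hbmin : ∀ x ∈ T, b ≤ x := fun x hx => Nat.sInf_le hx
    have hmC : m ∉ C := by
      intro h
      have hCA := huniq C hC h
      exact absurd ham (not_lt.mpr (hminA a (hCA ▸ haC)))
    have hAC : A ≠ C := fun h => hmC (h ▸ hmA)
    -- the interval [m, b) is closed under the block relation
    have hclose : ∀ E ∈ π, ∀ x ∈ E, m ≤ x → x < b → ∀ y ∈ E, m ≤ y ∧ y < b := by
      intro E hE x hxE hmx hxb y hyE
      rcases eq_or_lt_of_le hmx with heq | hlt
      · -- x = m, so E = A
        have hEA := huniq E hE (heq ▸ hxE)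
        subst hEA
        have hmy : m ≤ y := hminA y hyE
        refine ⟨hmy, ?_⟩
        by_contra hby
        push_neg at hby
        rcases eq_or_lt_of_le hby with heq' | hlt'
        · -- y = b ∈ E ∩ C
          have hbE : b ∈ E ∩ C := Finset.mem_inter.mpr ⟨heq' ▸ hyE, hbC⟩
          rcases hlink E hE C hC hAC with hemp | ⟨_, _, _, _, hall⟩
          · exact absurd (hemp ▸ hbE) (Finset.notMem_empty b)
          · rcases hall b hbE with h | h
            · omega
            · have := fmin_le haC
              omega
        · -- crossing: a < m < b < y with a, b ∈ C and m, y ∈ E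
          exact hnc ⟨C, hC, E, hE, hAC.symm, a, haC, m, hmA, b, hbC, y, hyE,
            ham, hmb, hlt'⟩
      · -- m < x < b
        have hmy : m ≤ y := by
          by_contra hym
          push_neg at hym
          have hmE : m ∉ E := by
            intro h
            have hEA := huniq E hE h
            exact absurd hym (not_lt.mpr (hminA y (hEA ▸ hyE)))
          have : x ∈ T := ⟨hlt, E, hE, hxE, y, hyE, hym⟩
          exact absurd hxb (not_lt.mpr (hbmin x this))
        refine ⟨hmy, ?_⟩
        by_contra hby
        push_neg at hby
        have hEC : E ≠ C := by
          intro h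
          have : x ∈ T := ⟨hlt, C, hC, h ▸ hxE, a, haC, ham⟩
          exact absurd hxb (not_lt.mpr (hbmin x this))
        rcases eq_or_lt_of_le hby with heq' | hlt'
        · -- y = b ∈ E ∩ C
          have hbE : b ∈ E ∩ C := Finset.mem_inter.mpr ⟨heq' ▸ hyE, hbC⟩
          rcases hlink E hE C hC hEC with hemp | ⟨_, _, _, _, hall⟩
          · exact absurd (hemp ▸ hbE) (Finset.notMem_empty b)
          · rcases hall b hbE with h | h
            · have := fmin_le hxE
              omega
            · have := fmin_le haC
              omega
        · -- crossing: a < x < b < y with a, b ∈ C and x, y ∈ E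
          exact hnc ⟨C, hC, E, hE, hEC.symm, a, haC, x, hxE, b, hbC, y, hyE,
            lt_trans ham hlt, hxb, hlt'⟩
    -- EqvGen preserves membership in [m, b)
    have inv : ∀ x y : ℕ,
        Relation.EqvGen (fun a b => ∃ E ∈ π, a ∈ E ∧ b ∈ E) x y →
        ((m ≤ x ∧ x < b) ↔ (m ≤ y ∧ y < b)) := by
      intro x y h
      induction h with
      | rel x y h =>
        obtain ⟨E, hE, hxE, hyE⟩ := h
        constructor
        · intro ⟨h1, h2⟩; exact hclose E hE x hxE h1 h2 y hyE
        · intro ⟨h1, h2⟩; exact hclose E hE y hyE h1 h2 x hxE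
      | refl x => exact Iff.rfl
      | symm x y _ ih => exact ih.symm
      | trans x y z _ _ ih1 ih2 => exact ih1.trans ih2
    have h1Icc : (1 : ℕ) ∈ Finset.Icc 1 n := Finset.mem_Icc.mpr ⟨le_refl 1, by omega⟩
    have hrel := hconn m hmIcc 1 h1Icc
    have := (inv _ _ hrel).mp ⟨le_refl m, hmb⟩
    omega
  have : coverCount π m = 2 := by omega
  exact this
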